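/- Let X ~ N(0, I_p) be a standard Gaussian vector in ℝ^p and let β ∈ ℝ^p be any fixed vector. Then E[⟨X, β⟩³ X ⊗ X ⊗ X] = 6 β ⊗ β ⊗ β + 3 𝒯(‖β‖₂² β), where 𝒯(m) := Σ_{i∈[p]} (m ⊗ e_i ⊗ e_i + e_i ⊗ m ⊗ e_i + e_i ⊗ e_i ⊗ m). -/

import Mathlib

open MeasureTheory ProbabilityTheory Finset

/-- The standard Gaussian measure `N(0, I_p)` on `ℝ^p`. -/
noncomputable def stdGaussianPi (p : ℕ) : Measure (Fin p → ℝ) :=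
  Measure.pi fun _ => gaussianReal 0 1

/-- The symmetric third-order tensor
`𝒯(m) = ∑_{i ∈ [p]} (m ⊗ e_i ⊗ e_i + e_i ⊗ m ⊗ e_i + e_i ⊗ e_i ⊗ m)`, entrywise. -/
noncomputable def Tmap {p : ℕ} (m : Fin p → ℝ) : Fin p → Fin p → Fin p → ℝ :=
  fun a b c => ∑ i : Fin p,
    (m a * (if b = i then (1 : ℝ) else 0) * (if c = i then 1 else 0)
      + (if a = i then 1 else 0) * m b * (if c = i then 1 else 0)
      + (if a = i then 1 else 0) * (if b = i then 1 else 0) * m c)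

section Aux
open Real
open scoped NNReal ENNReal
open scoped NNReal ENNReal

noncomputable def gmom : ℕ → ℝ
  | 0 => 1
  | 1 => 0
  | (n+2) => (n+1) * gmom n

lemma integrable_pow_gauss (n : ℕ) :
    Integrable (fun x : ℝ => x ^ n * rexp (-2⁻¹ * x ^ 2)) := by
  have h := integrable_rpow_mul_exp_neg_mul_sq (b := 2⁻¹) (by norm_num)
    (s := (n : ℝ)) (lt_of_lt_of_le (by norm_num) (Nat.cast_nonneg n))
  simpa [Real.rpow_natCast] using h

lemma hasDerivAt_negexp (x : ℝ) :
    HasDerivAt (fun y : ℝ => -rexp (-2⁻¹ * y ^ 2)) (x * rexp (-2⁻¹ * x ^ 2)) x := by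
  have h1 : HasDerivAt (fun y : ℝ => -2⁻¹ * y ^ 2) (-2⁻¹ * (2 * x ^ 1)) x :=
    (hasDerivAt_pow 2 x).const_mul _
  have h2 := (h1.exp).neg
  refine h2.congr_deriv ?_
  ring

lemma Ib_one : ∫ x : ℝ, x ^ 1 * rexp (-2⁻¹ * x ^ 2) = 0 := by
  have h := integral_eq_zero_of_hasDerivAt_of_integrable
    (f := fun y : ℝ => -rexp (-2⁻¹ * y ^ 2))
    (f' := fun x : ℝ => x ^ 1 * rexp (-2⁻¹ * x ^ 2))
    (fun x => by simpa [pow_one] using hasDerivAt_negexp x)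
    (integrable_pow_gauss 1)
    ((integrable_exp_neg_mul_sq (b := 2⁻¹) (by norm_num)).neg)
  exact h

lemma Ib_rec (n : ℕ) : ∫ x : ℝ, x ^ (n+2) * rexp (-2⁻¹ * x ^ 2)
    = (n+1) * ∫ x : ℝ, x ^ n * rexp (-2⁻¹ * x ^ 2) := by
  have hu : ∀ x : ℝ, HasDerivAt (fun y : ℝ => y ^ (n+1)) (((n:ℝ)+1) * x ^ n) x := by
    intro x
    have := hasDerivAt_pow (n+1) x
    simpa using this
  have huv' : Integrable ((fun y : ℝ => y ^ (n+1)) * (fun x : ℝ => x * rexp (-2⁻¹ * x ^ 2))) := by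
    have : ((fun y : ℝ => y ^ (n+1)) * (fun x : ℝ => x * rexp (-2⁻¹ * x ^ 2)))
        = fun x : ℝ => x ^ (n+2) * rexp (-2⁻¹ * x ^ 2) := by funext x; simp [Pi.mul_apply]; ring
    rw [this]; exact integrable_pow_gauss (n+2)
  have hu'v : Integrable ((fun x : ℝ => ((n:ℝ)+1) * x ^ n) * (fun y : ℝ => -rexp (-2⁻¹ * y ^ 2))) := by
    have : ((fun x : ℝ => ((n:ℝ)+1) * x ^ n) * (fun y : ℝ => -rexp (-2⁻¹ * y ^ 2)))
        = fun x : ℝ => -(((n:ℝ)+1) * (x ^ n * rexp (-2⁻¹ * x ^ 2))) := by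
      funext x; simp [Pi.mul_apply]; ring
    rw [this]; exact ((integrable_pow_gauss n).const_mul _).neg
  have huv : Integrable ((fun y : ℝ => y ^ (n+1)) * (fun y : ℝ => -rexp (-2⁻¹ * y ^ 2))) := by
    have : ((fun y : ℝ => y ^ (n+1)) * (fun y : ℝ => -rexp (-2⁻¹ * y ^ 2)))
        = fun x : ℝ => -(x ^ (n+1) * rexp (-2⁻¹ * x ^ 2)) := by funext x; simp [Pi.mul_apply]
    rw [this]; exact (integrable_pow_gauss (n+1)).neg
  have h := integral_mul_deriv_eq_deriv_mul_of_integrable (fun x _ => hu x) (fun x _ => hasDerivAt_negexp x) huv' hu'v huv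
  have e1 : ∫ x : ℝ, x ^ (n+1) * (x * rexp (-2⁻¹ * x ^ 2))
      = ∫ x : ℝ, x ^ (n+2) * rexp (-2⁻¹ * x ^ 2) := by
    congr 1; funext x; ring
  have e2 : ∫ x : ℝ, ((n:ℝ)+1) * x ^ n * -rexp (-2⁻¹ * x ^ 2)
      = -((n+1) * ∫ x : ℝ, x ^ n * rexp (-2⁻¹ * x ^ 2)) := by
    rw [← integral_const_mul, ← integral_neg]
    congr 1; funext x; ring
  rw [e1] at h
  rw [h, e2, neg_neg]

lemma gauss_pdf_eq (x : ℝ) :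
    gaussianPDFReal 0 1 x = (√(2 * π))⁻¹ * rexp (-2⁻¹ * x ^ 2) := by
  simp [gaussianPDFReal]
  ring_nf
  simp

lemma integral_gauss_density (g : ℝ → ℝ) :
    ∫ x, g x ∂(gaussianReal 0 1) = ∫ x, gaussianPDFReal 0 1 x * g x := by
  rw [gaussianReal_of_var_ne_zero 0 one_ne_zero]
  have h : gaussianPDF 0 1 = fun x => ((Real.toNNReal (gaussianPDFReal 0 1 x) : ℝ≥0) : ℝ≥0∞) := by
    funext x; rfl
  rw [h, integral_withDensity_eq_integral_smul
    ((measurable_gaussianPDFReal 0 1).real_toNNReal) g]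
  congr 1; funext x
  simp [NNReal.smul_def, Real.coe_toNNReal _ (gaussianPDFReal_nonneg 0 1 x)]

lemma key_link (n : ℕ) : ∫ x, x ^ n ∂(gaussianReal 0 1)
    = (√(2 * π))⁻¹ * ∫ x : ℝ, x ^ n * rexp (-2⁻¹ * x ^ 2) := by
  rw [integral_gauss_density (fun x => x ^ n), ← integral_const_mul]
  congr 1; funext x; rw [gauss_pdf_eq]; ring

lemma integral_pow_gaussian : ∀ n : ℕ, ∫ x, x ^ n ∂(gaussianReal 0 1) = gmom n := by
  intro n
  induction n using Nat.strong_induction_on with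
  | _ n ih =>
    match n with
    | 0 => simp [gmom]
    | 1 => rw [key_link 1, Ib_one, mul_zero]; rfl
    | (k+2) =>
      have h1 := key_link (k+2)
      rw [Ib_rec k] at h1
      have h2 := key_link k
      rw [h1, show gmom (k+2) = (k+1) * gmom k from rfl, ← ih k (by omega), h2]
      ring

lemma gmom_succ (n : ℕ) : gmom (n+1) = n * gmom (n-1) := by
  cases n with
  | zero => simp [gmom]
  | succ k => show gmom (k+2) = _ ; rw [gmom]; push_cast; simp
noncomputable def PM {p : ℕ} (S : Multiset (Fin p)) : ℝ := ∏ t, gmom (S.count t)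

lemma PM_zero {p : ℕ} : PM (0 : Multiset (Fin p)) = 1 := by
  simp [PM, show gmom 0 = 1 from rfl]

lemma PM_cons {p : ℕ} (s : Fin p) (S : Multiset (Fin p)) :
    PM (s ::ₘ S) = (S.count s : ℝ) * PM (S.erase s) := by
  rw [PM, PM, ← Finset.mul_prod_erase Finset.univ _ (Finset.mem_univ s),
      ← Finset.mul_prod_erase Finset.univ (fun t => gmom ((S.erase s).count t)) (Finset.mem_univ s)]
  have hprod : ∏ t ∈ Finset.univ.erase s, gmom ((s ::ₘ S).count t)
      = ∏ t ∈ Finset.univ.erase s, gmom ((S.erase s).count t) := by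
    refine Finset.prod_congr rfl fun t ht => ?_
    have hts : t ≠ s := Finset.ne_of_mem_erase ht
    rw [Multiset.count_cons_of_ne hts, Multiset.count_erase_of_ne hts]
  rw [hprod, Multiset.count_cons_self, Multiset.count_erase_self, gmom_succ]
  ring

lemma PM_pair {p : ℕ} (b c : Fin p) :
    PM (b ::ₘ {c} : Multiset (Fin p)) = if b = c then 1 else 0 := by
  rw [PM_cons]
  by_cases h : b = c
  · subst h
    simp [PM_zero]
  · simp [Multiset.count_singleton, if_neg (Ne.symm h), h, PM_zero]

lemma exp1 {p : ℕ} (β : Fin p → ℝ) (x : Fin p) :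
    ∑ k, β k * PM (k ::ₘ {x} : Multiset (Fin p)) = β x := by
  calc ∑ k, β k * PM (k ::ₘ {x} : Multiset (Fin p))
      = ∑ k, if k = x then β k else 0 := by
        refine Finset.sum_congr rfl fun k _ => ?_
        rw [PM_pair]; split <;> simp
    _ = β x := by simp [Finset.sum_ite_eq']

section Three
variable {p : ℕ} (a b c : Fin p)

lemma count3 (j : Fin p) :
    (((a ::ₘ b ::ₘ {c} : Multiset (Fin p)).count j : ℝ))
      = (if j = a then (1:ℝ) else 0) + (if j = b then 1 else 0) + (if j = c then 1 else 0) := by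
  simp only [Multiset.count_cons, Multiset.count_singleton]
  push_cast
  ring

lemma erase3a : ((a ::ₘ b ::ₘ {c} : Multiset (Fin p)).erase a) = b ::ₘ {c} :=
  Multiset.erase_cons_head a _

lemma swap3b : (a ::ₘ b ::ₘ {c} : Multiset (Fin p)) = b ::ₘ a ::ₘ {c} :=
  Multiset.cons_swap a b {c}

lemma swap3c : (a ::ₘ b ::ₘ {c} : Multiset (Fin p)) = c ::ₘ a ::ₘ {b} := by
  show a ::ₘ b ::ₘ c ::ₘ 0 = c ::ₘ a ::ₘ b ::ₘ 0
  rw [Multiset.cons_swap b c, Multiset.cons_swap a c]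

lemma erase3b : ((a ::ₘ b ::ₘ {c} : Multiset (Fin p)).erase b) = a ::ₘ {c} := by
  rw [swap3b, Multiset.erase_cons_head]

lemma erase3c : ((a ::ₘ b ::ₘ {c} : Multiset (Fin p)).erase c) = a ::ₘ {b} := by
  rw [swap3c, Multiset.erase_cons_head]

lemma exp3 (β : Fin p → ℝ) :
    ∑ j, β j * PM (j ::ₘ a ::ₘ b ::ₘ {c} : Multiset (Fin p))
      = β a * PM (b ::ₘ {c} : Multiset (Fin p)) + β b * PM (a ::ₘ {c} : Multiset (Fin p))
        + β c * PM (a ::ₘ {b} : Multiset (Fin p)) := by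
  have h : ∀ j, PM (j ::ₘ a ::ₘ b ::ₘ {c} : Multiset (Fin p))
      = ((a ::ₘ b ::ₘ {c} : Multiset (Fin p)).count j : ℝ)
        * PM ((a ::ₘ b ::ₘ {c} : Multiset (Fin p)).erase j) := fun j => PM_cons j _
  calc ∑ j, β j * PM (j ::ₘ a ::ₘ b ::ₘ {c} : Multiset (Fin p))
      = ∑ j, ((if j = a then β j * PM ((a ::ₘ b ::ₘ {c} : Multiset (Fin p)).erase j) else 0)
          + ((if j = b then β j * PM ((a ::ₘ b ::ₘ {c} : Multiset (Fin p)).erase j) else 0)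
          + (if j = c then β j * PM ((a ::ₘ b ::ₘ {c} : Multiset (Fin p)).erase j) else 0))) := by
        refine Finset.sum_congr rfl fun j _ => ?_
        rw [h j, count3]
        split <;> split <;> split <;> ring
    _ = _ := by
        rw [Finset.sum_add_distrib, Finset.sum_add_distrib]
        simp only [Finset.sum_ite_eq', Finset.mem_univ, if_true]
        rw [erase3a, erase3b, erase3c]
        ring

end Three

section Five
variable {p : ℕ} (j k a b c : Fin p)

lemma count5 (i : Fin p) :
    (((j ::ₘ k ::ₘ a ::ₘ b ::ₘ {c} : Multiset (Fin p)).count i : ℝ))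
      = (if i = j then (1:ℝ) else 0) + (if i = k then 1 else 0) + (if i = a then 1 else 0)
        + (if i = b then 1 else 0) + (if i = c then 1 else 0) := by
  simp only [Multiset.count_cons, Multiset.count_singleton]
  push_cast
  ring

lemma erase5j : ((j ::ₘ k ::ₘ a ::ₘ b ::ₘ {c} : Multiset (Fin p)).erase j)
    = k ::ₘ a ::ₘ b ::ₘ {c} := Multiset.erase_cons_head j _

lemma erase5k : ((j ::ₘ k ::ₘ a ::ₘ b ::ₘ {c} : Multiset (Fin p)).erase k)
    = j ::ₘ a ::ₘ b ::ₘ {c} := by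
  rw [Multiset.cons_swap j k, Multiset.erase_cons_head]

lemma erase5a : ((j ::ₘ k ::ₘ a ::ₘ b ::ₘ {c} : Multiset (Fin p)).erase a)
    = j ::ₘ k ::ₘ b ::ₘ {c} := by
  rw [Multiset.cons_swap k a, Multiset.cons_swap j a, Multiset.erase_cons_head]

lemma erase5b : ((j ::ₘ k ::ₘ a ::ₘ b ::ₘ {c} : Multiset (Fin p)).erase b)
    = j ::ₘ k ::ₘ a ::ₘ {c} := by
  rw [Multiset.cons_swap a b, Multiset.cons_swap k b, Multiset.cons_swap j b,
    Multiset.erase_cons_head]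

lemma erase5c : ((j ::ₘ k ::ₘ a ::ₘ b ::ₘ {c} : Multiset (Fin p)).erase c)
    = j ::ₘ k ::ₘ a ::ₘ {b} := by
  show (j ::ₘ k ::ₘ a ::ₘ b ::ₘ c ::ₘ 0).erase c = j ::ₘ k ::ₘ a ::ₘ b ::ₘ 0
  rw [Multiset.cons_swap b c, Multiset.cons_swap a c, Multiset.cons_swap k c,
    Multiset.cons_swap j c, Multiset.erase_cons_head]

lemma exp5 (β : Fin p → ℝ) :
    ∑ i, β i * PM (i ::ₘ j ::ₘ k ::ₘ a ::ₘ b ::ₘ {c} : Multiset (Fin p))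
      = β j * PM (k ::ₘ a ::ₘ b ::ₘ {c} : Multiset (Fin p))
        + β k * PM (j ::ₘ a ::ₘ b ::ₘ {c} : Multiset (Fin p))
        + β a * PM (j ::ₘ k ::ₘ b ::ₘ {c} : Multiset (Fin p))
        + β b * PM (j ::ₘ k ::ₘ a ::ₘ {c} : Multiset (Fin p))
        + β c * PM (j ::ₘ k ::ₘ a ::ₘ {b} : Multiset (Fin p)) := by
  have h : ∀ i, PM (i ::ₘ j ::ₘ k ::ₘ a ::ₘ b ::ₘ {c} : Multiset (Fin p))
      = ((j ::ₘ k ::ₘ a ::ₘ b ::ₘ {c} : Multiset (Fin p)).count i : ℝ)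
        * PM ((j ::ₘ k ::ₘ a ::ₘ b ::ₘ {c} : Multiset (Fin p)).erase i) := fun i => PM_cons i _
  calc ∑ i, β i * PM (i ::ₘ j ::ₘ k ::ₘ a ::ₘ b ::ₘ {c} : Multiset (Fin p))
      = ∑ i, ((if i = j then β i * PM ((j ::ₘ k ::ₘ a ::ₘ b ::ₘ {c} : Multiset (Fin p)).erase i) else 0)
          + ((if i = k then β i * PM ((j ::ₘ k ::ₘ a ::ₘ b ::ₘ {c} : Multiset (Fin p)).erase i) else 0)
          + ((if i = a then β i * PM ((j ::ₘ k ::ₘ a ::ₘ b ::ₘ {c} : Multiset (Fin p)).erase i) else 0)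
          + ((if i = b then β i * PM ((j ::ₘ k ::ₘ a ::ₘ b ::ₘ {c} : Multiset (Fin p)).erase i) else 0)
          + (if i = c then β i * PM ((j ::ₘ k ::ₘ a ::ₘ b ::ₘ {c} : Multiset (Fin p)).erase i) else 0))))) := by
        refine Finset.sum_congr rfl fun i _ => ?_
        rw [h i, count5]
        split <;> split <;> split <;> split <;> split <;> ring
    _ = _ := by
        rw [Finset.sum_add_distrib, Finset.sum_add_distrib, Finset.sum_add_distrib,
          Finset.sum_add_distrib]
        simp only [Finset.sum_ite_eq', Finset.mem_univ, if_true]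
        rw [erase5j, erase5k, erase5a, erase5b, erase5c]
        ring
end Five


lemma integrable_pow_gaussReal (n : ℕ) : Integrable (fun x : ℝ => x ^ n) (gaussianReal 0 1) := by
  rw [gaussianReal_of_var_ne_zero 0 one_ne_zero]
  rw [integrable_withDensity_iff (measurable_gaussianPDF 0 1)
    (Filter.Eventually.of_forall fun x => ENNReal.ofReal_lt_top)]
  have h : (fun x : ℝ => x ^ n * (gaussianPDF 0 1 x).toReal)
      = fun x : ℝ => (√(2 * π))⁻¹ * (x ^ n * rexp (-2⁻¹ * x ^ 2)) := by
    funext x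
    rw [gaussianPDF, ENNReal.toReal_ofReal (gaussianPDFReal_nonneg 0 1 x), gauss_pdf_eq]
    ring
  rw [h]
  exact (integrable_pow_gauss n).const_mul _

lemma integral_prod_pow (p : ℕ) (c : Fin p → ℕ) :
    ∫ x, ∏ t, (x t) ^ (c t) ∂(stdGaussianPi p) = ∏ t, gmom (c t) := by
  letI : MeasureSpace ℝ := ⟨gaussianReal 0 1⟩
  haveI : SigmaFinite (volume : Measure ℝ) := by
    change SigmaFinite (gaussianReal 0 1); infer_instance
  have h : stdGaussianPi p = (volume : Measure (Fin p → ℝ)) := rfl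
  rw [h]
  rw [show (volume : Measure (Fin p → ℝ)) = Measure.pi fun _ => (volume : Measure ℝ) from rfl,
    integral_fintype_prod_eq_prod (f := fun t (x : ℝ) => x ^ (c t))]
  exact Finset.prod_congr rfl fun t _ => integral_pow_gaussian (c t)

lemma integrable_monomial (p : ℕ) (c : Fin p → ℕ) :
    Integrable (fun x : Fin p → ℝ => ∏ t, (x t) ^ (c t)) (stdGaussianPi p) := by
  letI : MeasureSpace ℝ := ⟨gaussianReal 0 1⟩
  haveI : SigmaFinite (volume : Measure ℝ) := by
    change SigmaFinite (gaussianReal 0 1); infer_instance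
  have h : stdGaussianPi p = (volume : Measure (Fin p → ℝ)) := rfl
  rw [h]
  exact Integrable.fintype_prod (f := fun t (x : ℝ) => x ^ (c t))
    fun t => integrable_pow_gaussReal (c t)

lemma list_prod_eq {p : ℕ} (x : Fin p → ℝ) (l : List (Fin p)) :
    (l.map x).prod = ∏ t, x t ^ (l.count t) := by
  induction l with
  | nil => simp
  | cons s l ih =>
    rw [List.map_cons, List.prod_cons, ih]
    have h1 : ∀ t : Fin p, (s :: l).count t = l.count t + (if t = s then 1 else 0) := by
      intro t
      by_cases h : t = s
      · subst h; simp
      · simp [List.count_cons, h, Ne.symm h]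
    have h2 : ∏ t, x t ^ ((s :: l).count t)
        = ∏ t, (x t ^ (l.count t) * x t ^ (if t = s then 1 else 0)) := by
      refine Finset.prod_congr rfl fun t _ => ?_
      rw [h1 t, pow_add]
    rw [h2, Finset.prod_mul_distrib]
    have h3 : ∏ t, x t ^ (if t = s then 1 else 0) = x s := by
      have : ∀ t : Fin p, x t ^ (if t = s then 1 else 0) = if t = s then x t else 1 := by
        intro t; split <;> simp
      rw [Finset.prod_congr rfl fun t _ => this t, Finset.prod_ite_eq' Finset.univ s x]
      simp
    rw [h3]
    ring

lemma integral_list {p : ℕ} (l : List (Fin p)) :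
    ∫ x, (l.map x).prod ∂(stdGaussianPi p) = PM (↑l : Multiset (Fin p)) := by
  have h : ∀ x : Fin p → ℝ, (l.map x).prod = ∏ t, x t ^ (l.count t) := fun x => list_prod_eq x l
  rw [show (fun x : Fin p → ℝ => (l.map x).prod) = fun x => ∏ t, x t ^ (l.count t) from funext h]
  rw [integral_prod_pow]
  rw [PM]
  exact Finset.prod_congr rfl fun t _ => by rw [Multiset.coe_count]

lemma integrable_list {p : ℕ} (l : List (Fin p)) :
    Integrable (fun x : Fin p → ℝ => (l.map x).prod) (stdGaussianPi p) := by
  have h : ∀ x : Fin p → ℝ, (l.map x).prod = ∏ t, x t ^ (l.count t) := fun x => list_prod_eq x l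
  rw [show (fun x : Fin p → ℝ => (l.map x).prod) = fun x => ∏ t, x t ^ (l.count t) from funext h]
  exact integrable_monomial p _
lemma S3_eval {p : ℕ} (β : Fin p → ℝ) (a b c : Fin p) :
    ∑ i, ∑ j, ∑ k, β i * β j * β k * PM (i ::ₘ j ::ₘ k ::ₘ a ::ₘ b ::ₘ {c} : Multiset (Fin p))
      = 6 * (β a * β b * β c)
        + 3 * ((∑ t, β t ^ 2) * (β a * (if b = c then (1:ℝ) else 0)
            + β b * (if a = c then (1:ℝ) else 0) + β c * (if a = b then (1:ℝ) else 0))) := by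
  set Q : ℝ := ∑ t, β t ^ 2 with hQdef
  set E : ℝ := β a * PM (b ::ₘ {c} : Multiset (Fin p)) + β b * PM (a ::ₘ {c} : Multiset (Fin p))
    + β c * PM (a ::ₘ {b} : Multiset (Fin p)) with hE
  have rot : ∀ (x y z : Fin p) (R : Multiset (Fin p)),
      x ::ₘ y ::ₘ z ::ₘ R = z ::ₘ x ::ₘ y ::ₘ R := by
    intro x y z R; rw [Multiset.cons_swap y z, Multiset.cons_swap x z]
  have step1 : ∀ i j : Fin p,
      ∑ k, β i * β j * β k * PM (i ::ₘ j ::ₘ k ::ₘ a ::ₘ b ::ₘ {c} : Multiset (Fin p))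
      = β i * β j * (β i * PM (j ::ₘ a ::ₘ b ::ₘ {c} : Multiset (Fin p))
        + β j * PM (i ::ₘ a ::ₘ b ::ₘ {c} : Multiset (Fin p))
        + β a * PM (i ::ₘ j ::ₘ b ::ₘ {c} : Multiset (Fin p))
        + β b * PM (i ::ₘ j ::ₘ a ::ₘ {c} : Multiset (Fin p))
        + β c * PM (i ::ₘ j ::ₘ a ::ₘ {b} : Multiset (Fin p))) := by
    intro i j
    rw [← exp5 i j a b c β, Finset.mul_sum]
    refine Finset.sum_congr rfl fun k _ => ?_
    rw [rot i j k]
    ring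
  have step2 : ∀ i : Fin p,
      ∑ j, ∑ k, β i * β j * β k * PM (i ::ₘ j ::ₘ k ::ₘ a ::ₘ b ::ₘ {c} : Multiset (Fin p))
      = β i ^ 2 * (2 * E)
        + (β i * PM (i ::ₘ a ::ₘ b ::ₘ {c} : Multiset (Fin p))) * Q
        + (β i * PM (i ::ₘ {c} : Multiset (Fin p))) * (2 * (β a * β b))
        + (β i * PM (i ::ₘ {b} : Multiset (Fin p))) * (2 * (β a * β c))
        + (β i * PM (i ::ₘ {a} : Multiset (Fin p))) * (2 * (β b * β c)) := by
    intro i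
    have swap2 : ∀ (x : Fin p) (R : Multiset (Fin p)), i ::ₘ x ::ₘ R = x ::ₘ i ::ₘ R :=
      fun x R => Multiset.cons_swap i x R
    calc ∑ j, ∑ k, β i * β j * β k * PM (i ::ₘ j ::ₘ k ::ₘ a ::ₘ b ::ₘ {c} : Multiset (Fin p))
        = ∑ j, (β i ^ 2 * (β j * PM (j ::ₘ a ::ₘ b ::ₘ {c} : Multiset (Fin p)))
            + (β i * PM (i ::ₘ a ::ₘ b ::ₘ {c} : Multiset (Fin p))) * β j ^ 2
            + (β i * β a) * (β j * PM (j ::ₘ i ::ₘ b ::ₘ {c} : Multiset (Fin p)))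
            + (β i * β b) * (β j * PM (j ::ₘ i ::ₘ a ::ₘ {c} : Multiset (Fin p)))
            + (β i * β c) * (β j * PM (j ::ₘ i ::ₘ a ::ₘ {b} : Multiset (Fin p)))) := by
          refine Finset.sum_congr rfl fun j _ => ?_
          rw [step1 i j, swap2 j (b ::ₘ {c}), swap2 j (a ::ₘ {c}), swap2 j (a ::ₘ {b})]
          ring
      _ = β i ^ 2 * E + (β i * PM (i ::ₘ a ::ₘ b ::ₘ {c} : Multiset (Fin p))) * Q
            + (β i * β a) * (β i * PM (b ::ₘ {c} : Multiset (Fin p))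
                + β b * PM (i ::ₘ {c} : Multiset (Fin p)) + β c * PM (i ::ₘ {b} : Multiset (Fin p)))
            + (β i * β b) * (β i * PM (a ::ₘ {c} : Multiset (Fin p))
                + β a * PM (i ::ₘ {c} : Multiset (Fin p)) + β c * PM (i ::ₘ {a} : Multiset (Fin p)))
            + (β i * β c) * (β i * PM (a ::ₘ {b} : Multiset (Fin p))
                + β a * PM (i ::ₘ {b} : Multiset (Fin p)) + β b * PM (i ::ₘ {a} : Multiset (Fin p))) := by
          simp only [Finset.sum_add_distrib, ← Finset.mul_sum]
          rw [exp3 a b c β, exp3 i b c β, exp3 i a c β, exp3 i a b β, ← hE, ← hQdef]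
      _ = _ := by ring
  calc ∑ i, ∑ j, ∑ k, β i * β j * β k * PM (i ::ₘ j ::ₘ k ::ₘ a ::ₘ b ::ₘ {c} : Multiset (Fin p))
      = ∑ i, (β i ^ 2 * (2 * E)
        + (β i * PM (i ::ₘ a ::ₘ b ::ₘ {c} : Multiset (Fin p))) * Q
        + (β i * PM (i ::ₘ {c} : Multiset (Fin p))) * (2 * (β a * β b))
        + (β i * PM (i ::ₘ {b} : Multiset (Fin p))) * (2 * (β a * β c))
        + (β i * PM (i ::ₘ {a} : Multiset (Fin p))) * (2 * (β b * β c))) :=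
        Finset.sum_congr rfl fun i _ => step2 i
    _ = Q * (2 * E) + E * Q + β c * (2 * (β a * β b)) + β b * (2 * (β a * β c))
        + β a * (2 * (β b * β c)) := by
        rw [Finset.sum_add_distrib, Finset.sum_add_distrib, Finset.sum_add_distrib,
          Finset.sum_add_distrib, ← Finset.sum_mul, ← Finset.sum_mul, ← Finset.sum_mul,
          ← Finset.sum_mul, ← Finset.sum_mul, exp3 a b c β, exp1 β a, exp1 β b, exp1 β c,
          ← hE, ← hQdef]
    _ = _ := by
        rw [hE, PM_pair b c, PM_pair a c, PM_pair a b]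
        ring

lemma Tmap_eval {p : ℕ} (m : Fin p → ℝ) (a b c : Fin p) :
    Tmap m a b c = m a * (if b = c then (1:ℝ) else 0) + m b * (if a = c then (1:ℝ) else 0)
      + m c * (if a = b then (1:ℝ) else 0) := by
  rw [Tmap]
  rw [Finset.sum_add_distrib, Finset.sum_add_distrib]
  have h1 : ∑ i, m a * (if b = i then (1:ℝ) else 0) * (if c = i then 1 else 0)
      = m a * (if b = c then (1:ℝ) else 0) := by
    by_cases h : b = c <;> simp [Finset.sum_ite_eq, mul_ite, ite_mul, h, eq_comm]
  have h2 : ∑ i, (if a = i then (1:ℝ) else 0) * m b * (if c = i then 1 else 0)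
      = m b * (if a = c then (1:ℝ) else 0) := by
    by_cases h : a = c <;> simp [Finset.sum_ite_eq, mul_ite, ite_mul, h, eq_comm]
  have h3 : ∑ i, (if a = i then (1:ℝ) else 0) * (if b = i then 1 else 0) * m c
      = m c * (if a = b then (1:ℝ) else 0) := by
    by_cases h : a = b <;> simp [Finset.sum_ite_eq, mul_ite, ite_mul, h, eq_comm]
  rw [h1, h2, h3]

end Aux

/-- If `X ~ N(0, I_p)` and `β ∈ ℝ^p` is fixed, then
`E[⟨X,β⟩³ X ⊗ X ⊗ X] = 6 β^{⊗3} + 3 𝒯(‖β‖₂² β)`, stated entrywise. -/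
theorem gaussian_third_tensor_moment (p : ℕ) (β : Fin p → ℝ) :
    ∀ a b c : Fin p,
      ∫ x, (∑ i, x i * β i) ^ 3 * (x a * x b * x c) ∂(stdGaussianPi p)
        = 6 * (β a * β b * β c)
          + 3 * Tmap (fun t => (∑ i, (β i) ^ 2) * β t) a b c := by
  intro a b c
  have hexp : ∀ x : Fin p → ℝ, (∑ i, x i * β i) ^ 3 * (x a * x b * x c)
      = ∑ i, ∑ j, ∑ k, (β i * β j * β k) * (([i, j, k, a, b, c].map x).prod) := by
    intro x
    have h3 : (∑ i, x i * β i) ^ 3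
        = (∑ i, x i * β i) * ((∑ j, x j * β j) * (∑ k, x k * β k)) := by ring
    rw [h3]
    simp only [Finset.sum_mul, Finset.mul_sum]
    refine Finset.sum_congr rfl fun i _ => ?_
    refine Finset.sum_congr rfl fun j _ => ?_
    refine Finset.sum_congr rfl fun k _ => ?_
    simp only [List.map_cons, List.map_nil, List.prod_cons, List.prod_nil]
    ring
  rw [show (fun x : Fin p → ℝ => (∑ i, x i * β i) ^ 3 * (x a * x b * x c))
      = fun x : Fin p → ℝ => ∑ i, ∑ j, ∑ k, (β i * β j * β k)
          * (([i, j, k, a, b, c].map x).prod) from funext hexp]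
  have hint2 : ∀ i j k : Fin p, Integrable
      (fun x : Fin p → ℝ => (β i * β j * β k) * (([i, j, k, a, b, c].map x).prod))
      (stdGaussianPi p) := fun i j k => (integrable_list _).const_mul _
  have hint1 : ∀ i j : Fin p, Integrable
      (fun x : Fin p → ℝ => ∑ k, (β i * β j * β k) * (([i, j, k, a, b, c].map x).prod))
      (stdGaussianPi p) := fun i j => integrable_finset_sum _ fun k _ => hint2 i j k
  have hint0 : ∀ i : Fin p, Integrable
      (fun x : Fin p → ℝ => ∑ j, ∑ k, (β i * β j * β k) * (([i, j, k, a, b, c].map x).prod))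
      (stdGaussianPi p) := fun i => integrable_finset_sum _ fun j _ => hint1 i j
  rw [integral_finset_sum _ fun i _ => hint0 i]
  have hswap : ∀ i : Fin p,
      ∫ x, ∑ j, ∑ k, (β i * β j * β k) * (([i, j, k, a, b, c].map x).prod) ∂(stdGaussianPi p)
      = ∑ j, ∑ k, (β i * β j * β k) * PM (i ::ₘ j ::ₘ k ::ₘ a ::ₘ b ::ₘ {c} : Multiset (Fin p)) := by
    intro i
    rw [integral_finset_sum _ fun j _ => hint1 i j]
    refine Finset.sum_congr rfl fun j _ => ?_
    rw [integral_finset_sum _ fun k _ => hint2 i j k]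
    refine Finset.sum_congr rfl fun k _ => ?_
    rw [integral_const_mul, integral_list]
    rfl
  rw [Finset.sum_congr rfl fun i _ => hswap i]
  rw [S3_eval β a b c]
  rw [Tmap_eval]
  ring
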